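/- For every integer n with n ≥ 6 and n ≡ 2 (mod 4), the n-dimensional simplified shuffle-cube SSQ_n is Hamiltonian-connected: for any two distinct vertices u and v of SSQ_n there is a Hamiltonian path of SSQ_n joining u and v. -/

import Mathlib

/-- Vertices of the `n`-dimensional simplified shuffle-cube: binary strings of
length `n` (encoded as functions `ℕ → Bool` vanishing from position `n` on)
such that for every `j` with `1 ≤ j ≤ (n-2)/4` the bits in positions
`4j+1` and `4j` are equal. -/
def SSQVertex (n : ℕ) : Type :=
  {u : ℕ → Bool // (∀ i, n ≤ i → u i = false) ∧
    ∀ j, 1 ≤ j → j ≤ (n - 2) / 4 → u (4 * j + 1) = u (4 * j)}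

/-- The set `V₀₀` = {1111, 0001, 0010, 0011} of 4-bit patterns
(most significant bit first). -/
def V00 : Set (Bool × Bool × Bool × Bool) :=
  {(true, true, true, true), (false, false, false, true),
   (false, false, true, false), (false, false, true, true)}

/-- The adjacency condition of the simplified shuffle-cube: either the two
strings agree everywhere except in exactly one of the bits in positions `1`
and `0`, or there is a `j` with `1 ≤ j ≤ (n-2)/4` such that the strings agree
outside the positions `4j-2, …, 4j+1` and the bitwise XOR of the `j`-th 4-bit
blocks lies in `V₀₀`. -/
def ssqRel (n : ℕ) (u v : ℕ → Bool) : Prop :=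
  ((∀ i, 2 ≤ i → u i = v i) ∧ ((u 0 = v 0) ↔ ¬ (u 1 = v 1))) ∨
  (∃ j, 1 ≤ j ∧ j ≤ (n - 2) / 4 ∧
    (∀ i, (i < 4 * j - 2 ∨ 4 * j + 1 < i) → u i = v i) ∧
    (xor (u (4 * j + 1)) (v (4 * j + 1)), xor (u (4 * j)) (v (4 * j)),
     xor (u (4 * j - 1)) (v (4 * j - 1)), xor (u (4 * j - 2)) (v (4 * j - 2))) ∈ V00)

/-- The `n`-dimensional simplified shuffle-cube `SSQ_n`. -/
def SSQ (n : ℕ) : SimpleGraph (SSQVertex n) :=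
  SimpleGraph.fromRel (fun u v => ssqRel n u.1 v.1)

noncomputable instance (n : ℕ) : DecidableEq (SSQVertex n) := Classical.decEq _



open SimpleGraph

variable {V W : Type*}

/-- Hamiltonian-connectedness. -/
def HamConn [DecidableEq V] (G : SimpleGraph V) : Prop :=
  ∀ u v : V, u ≠ v → ∃ p : G.Walk u v, p.IsHamiltonian

lemma HamConn.of_iso [DecidableEq V] [DecidableEq W] {G : SimpleGraph V} {H : SimpleGraph W}
    (e : G ≃g H) (h : HamConn G) : HamConn H := by
  intro u v huv
  obtain ⟨p, hp⟩ := h (e.symm u) (e.symm v) (fun he => huv (by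
    have := congrArg e he; simpa using this))
  refine ⟨(p.map e.toHom).copy (by simp) (by simp), ?_⟩
  have := hp.map e.toHom e.toEquiv.bijective
  intro a
  rw [SimpleGraph.Walk.support_copy]
  exact this a

lemma walkOfList {G : SimpleGraph V} :
    ∀ (l : List V) (u v : V), l.Chain' G.Adj → l.head? = some u → l.getLast? = some v →
      ∃ p : G.Walk u v, p.support = l := by
  intro l
  induction l with
  | nil => intro u v _ h; simp at h
  | cons a t ih =>
    intro u v hc hh hl
    have hau : a = u := by simpa using hh
    subst hau
    cases t with
    | nil =>
      have hv : a = v := by simpa using hl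
      subst hv
      exact ⟨SimpleGraph.Walk.nil, by simp⟩
    | cons b t' =>
      have hadj : G.Adj a b := (List.isChain_cons_cons.mp hc).1
      obtain ⟨p, hp⟩ := ih b v (List.isChain_cons_cons.mp hc).2 rfl
        (by simpa [List.getLast?_cons_cons] using hl)
      exact ⟨SimpleGraph.Walk.cons hadj p, by simp [hp]⟩

section Snake
variable [DecidableEq V] [DecidableEq W] {G : SimpleGraph V} {H : SimpleGraph W}

lemma support_boxProdRight {x y : W} (a : V) (R : H.Walk x y) :
    (SimpleGraph.Walk.boxProdRight G a R).support = R.support.map (fun w => (a, w)) := by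
  unfold SimpleGraph.Walk.boxProdRight
  exact SimpleGraph.Walk.support_map _ _

lemma count_instances {α : Type*} [inst1 : BEq α] [LawfulBEq α] [DecidableEq α] (x : α)
    (l : List α) : @List.count α inst1 x l = @List.count α instBEqOfDecidableEq x l := by
  induction l with
  | nil => rfl
  | cons a t ih =>
    rw [@List.count_cons _ inst1, @List.count_cons _ instBEqOfDecidableEq, ih]
    by_cases h : a = x <;> simp [h]

lemma layer_count {x y : W} (a : V) (R : H.Walk x y) (hR : R.IsHamiltonian) (c : V) (z : W) :
    List.count ((c, z) : V × W)
      (SimpleGraph.Walk.boxProdRight G a R).support = if c = a then 1 else 0 := by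
  rw [support_boxProdRight]
  by_cases hc : c = a
  · subst hc
    rw [count_instances]
    rw [show ((c, z) : V × W) = (fun w => (c, w)) z from rfl]
    rw [@List.count_map_of_injective _ _ instBEqOfDecidableEq _ instBEqOfDecidableEq _ _ (fun w => ((c, w) : V × W))
      (fun z1 z2 h => by simpa using congrArg Prod.snd h)]
    simp [hR z]
  · rw [List.count_eq_zero_of_not_mem, if_neg hc]
    simp only [List.mem_map]
    rintro ⟨w, _, hw⟩
    exact hc (congrArg Prod.fst hw).symm

lemma snake (hH : HamConn H) (h3 : ∀ x y : W, ∃ z : W, z ≠ x ∧ z ≠ y)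
    {a b : V} (P : G.Walk a b) :
    ∀ (x y : W), (x ≠ y ∨ ¬ P.Nil) →
      ∃ Q : (G □ H).Walk (a, x) (b, y),
        ∀ c z, List.count ((c, z) : V × W) Q.support = P.support.count c := by
  induction P with
  | @nil a =>
    intro x y h
    have hxy : x ≠ y := h.resolve_right (not_not_intro SimpleGraph.Walk.Nil.nil)
    obtain ⟨R, hR⟩ := hH x y hxy
    refine ⟨SimpleGraph.Walk.boxProdRight G a R, ?_⟩
    intro c z
    rw [layer_count a R hR c z]
    simp [List.count_singleton', eq_comm]
  | @cons a a' b hadj P ih =>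
    intro x y _
    obtain ⟨w, hwx, hwy⟩ := h3 x y
    obtain ⟨R, hR⟩ := hH x w (Ne.symm hwx)
    obtain ⟨Q', hQ'⟩ := ih w y (Or.inl hwy)
    have hcross : (G □ H).Adj (a, w) (a', w) := Or.inl ⟨hadj, rfl⟩
    refine ⟨(SimpleGraph.Walk.boxProdRight G a R).append (SimpleGraph.Walk.cons hcross Q'), ?_⟩
    intro c z
    rw [SimpleGraph.Walk.support_append, List.count_append]
    have htail : (SimpleGraph.Walk.cons hcross Q').support.tail = Q'.support := by
      simp [SimpleGraph.Walk.support_cons]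
    rw [htail, hQ' c z, layer_count a R hR c z, SimpleGraph.Walk.support_cons, List.count_cons]
    by_cases hc : c = a
    · subst hc; simp [add_comm]
    · simp [hc, Ne.symm hc]

lemma boxProd_hamConn_fst (hG : HamConn G) (hH : HamConn H)
    (h3H : ∀ x y : W, ∃ z : W, z ≠ x ∧ z ≠ y) {a b : V} {x y : W} (hab : a ≠ b) :
    ∃ Q : (G □ H).Walk (a, x) (b, y), Q.IsHamiltonian := by
  obtain ⟨P, hP⟩ := hG a b hab
  obtain ⟨Q, hQ⟩ := snake hH h3H P x y (Or.inr (SimpleGraph.Walk.not_nil_of_ne hab))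
  refine ⟨Q, fun ⟨c, z⟩ => ?_⟩
  rw [← count_instances (x := ((c, z) : V × W))]
  exact (hQ c z).trans (hP c)

lemma boxProd_hamConn (hG : HamConn G) (hH : HamConn H)
    (h3G : ∀ x y : V, ∃ z : V, z ≠ x ∧ z ≠ y)
    (h3H : ∀ x y : W, ∃ z : W, z ≠ x ∧ z ≠ y) : HamConn (G □ H) := by
  rintro ⟨a, x⟩ ⟨b, y⟩ hne
  by_cases hab : a = b
  · subst hab
    have hxy : x ≠ y := fun h => hne (by rw [h])
    obtain ⟨Q, hQ⟩ := boxProd_hamConn_fst hH hG h3G (x := a) (y := a) hxy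
    refine ⟨(Q.map (boxProdComm H G).toHom).copy rfl rfl, ?_⟩
    intro c
    erw [SimpleGraph.Walk.support_copy]
    exact hQ.map _ (boxProdComm H G).toEquiv.bijective c
  · exact boxProd_hamConn_fst hG hH h3H hab

end Snake

abbrev V3 := Bool × Bool × Bool
abbrev V2 := Bool × Bool
abbrev VB := V2 × V3

def xor3 (u v : V3) : V3 := (xor u.1 v.1, xor u.2.1 v.2.1, xor u.2.2 v.2.2)
def xor2 (u v : V2) : V2 := (xor u.1 v.1, xor u.2 v.2)
def xorB (u v : VB) : VB := (xor2 u.1 v.1, xor3 u.2 v.2)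

def g3pat : V3 → Bool
  | (false, false, true) => true
  | (false, true, false) => true
  | (false, true, true) => true
  | (true, true, true) => true
  | _ => false

def q2pat : V2 → Bool
  | (false, true) => true
  | (true, false) => true
  | _ => false

lemma g3sym : ∀ u v : V3, g3pat (xor3 u v) = true → g3pat (xor3 v u) = true := by decide
lemma g3irr : ∀ u : V3, ¬ g3pat (xor3 u u) = true := by decide
lemma q2sym : ∀ u v : V2, q2pat (xor2 u v) = true → q2pat (xor2 v u) = true := by decide
lemma q2irr : ∀ u : V2, ¬ q2pat (xor2 u u) = true := by decide

def G3 : SimpleGraph V3 where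
  Adj u v := g3pat (xor3 u v) = true
  symm := ⟨fun u v h => g3sym u v h⟩
  loopless := ⟨g3irr⟩

def Q2 : SimpleGraph V2 where
  Adj u v := q2pat (xor2 u v) = true
  symm := ⟨fun u v h => q2sym u v h⟩
  loopless := ⟨q2irr⟩

instance : DecidableRel G3.Adj := fun u v => inferInstanceAs (Decidable (_ = true))
instance : DecidableRel Q2.Adj := fun u v => inferInstanceAs (Decidable (_ = true))
instance : DecidableRel (Q2 □ G3).Adj :=
  fun x y => decidable_of_iff' _ SimpleGraph.boxProd_adj

lemma xor3_cancel : ∀ w u v : V3, xor3 (xor3 w u) (xor3 w v) = xor3 u v := by decide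
lemma xor2_cancel : ∀ w u v : V2, xor2 (xor2 w u) (xor2 w v) = xor2 u v := by decide
lemma xor3_inj : ∀ w u v : V3, xor3 w u = xor3 w v ↔ u = v := by decide
lemma xor2_inj : ∀ w u v : V2, xor2 w u = xor2 w v ↔ u = v := by decide
lemma xor3_invol : ∀ w u : V3, xor3 w (xor3 w u) = u := by decide
lemma xor2_invol : ∀ w u : V2, xor2 w (xor2 w u) = u := by decide

def z3 : V3 := (false, false, false)
def zB : VB := ((false, false), z3)

lemma xor3_zero : ∀ u : V3, xor3 u z3 = u := by decide
lemma xorB_zero : ∀ u : VB, xorB u zB = u := by decide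
lemma xorB_invol : ∀ w u : VB, xorB w (xorB w u) = u := by decide
lemma xor3_eq_zero : ∀ u v : V3, xor3 u v = z3 ↔ u = v := by decide
lemma xorB_eq_zero : ∀ u v : VB, xorB u v = zB ↔ u = v := by decide

/-- Translation automorphism of `G3`. -/
def trG3 (w : V3) : G3 ≃g G3 where
  toFun u := xor3 w u
  invFun u := xor3 w u
  left_inv u := xor3_invol w u
  right_inv u := xor3_invol w u
  map_rel_iff' {u v} := by
    show G3.Adj _ _ ↔ G3.Adj u v
    show g3pat (xor3 (xor3 w u) (xor3 w v)) = true ↔ g3pat (xor3 u v) = true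
    rw [xor3_cancel]

/-- Translation automorphism of `Q2 □ G3`. -/
def trB (w : VB) : (Q2 □ G3) ≃g (Q2 □ G3) where
  toFun u := xorB w u
  invFun u := xorB w u
  left_inv u := xorB_invol w u
  right_inv u := xorB_invol w u
  map_rel_iff' {u v} := by
    show (Q2 □ G3).Adj (xorB w u) (xorB w v) ↔ (Q2 □ G3).Adj u v
    rw [SimpleGraph.boxProd_adj, SimpleGraph.boxProd_adj]
    show (q2pat (xor2 (xor2 w.1 u.1) (xor2 w.1 v.1)) = true ∧ xor3 w.2 u.2 = xor3 w.2 v.2)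
        ∨ (g3pat (xor3 (xor3 w.2 u.2) (xor3 w.2 v.2)) = true ∧ xor2 w.1 u.1 = xor2 w.1 v.1)
      ↔ _
    rw [xor2_cancel, xor3_cancel, xor3_inj, xor2_inj]
    exact Iff.rfl

def chainB {α : Type*} (adj : α → α → Bool) : List α → Bool
  | [] => true
  | [_] => true
  | a :: b :: t => adj a b && chainB adj (b :: t)

lemma chain'_of_chainB {α : Type*} {adj : α → α → Bool} {G : SimpleGraph α}
    (h : ∀ a b, adj a b = true → G.Adj a b) :
    ∀ l : List α, chainB adj l = true → l.Chain' G.Adj := by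
  intro l
  induction l with
  | nil => intro; exact List.isChain_nil
  | cons a t ih =>
    cases t with
    | nil => intro; exact List.isChain_singleton a
    | cons b t' =>
      intro hc
      have hc' := hc
      unfold chainB at hc'
      rw [Bool.and_eq_true] at hc'
      exact List.isChain_cons_cons.mpr ⟨h a b hc'.1, ih hc'.2⟩

def g3adjB (u v : V3) : Bool := g3pat (xor3 u v)
def badjB (u v : VB) : Bool :=
  (q2pat (xor2 u.1 v.1) && (u.2 == v.2)) || (g3pat (xor3 u.2 v.2) && (u.1 == v.1))

lemma g3adjB_adj : ∀ a b : V3, g3adjB a b = true → G3.Adj a b := fun _ _ h => h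

lemma badjB_adj : ∀ a b : VB, badjB a b = true → (Q2 □ G3).Adj a b := by
  intro a b h
  rw [SimpleGraph.boxProd_adj]
  simp only [badjB, Bool.or_eq_true, Bool.and_eq_true, beq_iff_eq] at h
  exact h.imp (fun hh => ⟨hh.1, hh.2⟩) (fun hh => ⟨hh.1, hh.2⟩)

def g3path : V3 → List V3
  | (false, false, true) => [(false, false, false), (false, true, false), (false, true, true), (true, false, false), (true, false, true), (true, true, true), (true, true, false), (false, false, true)]
  | (false, true, false) => [(false, false, false), (false, false, true), (false, true, true), (true, false, false), (true, true, false), (true, true, true), (true, false, true), (false, true, false)]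
  | (false, true, true) => [(false, false, false), (false, false, true), (false, true, false), (true, false, true), (true, true, false), (true, true, true), (true, false, false), (false, true, true)]
  | (true, false, false) => [(false, false, false), (false, false, true), (false, true, true), (false, true, false), (true, false, true), (true, true, false), (true, true, true), (true, false, false)]
  | (true, false, true) => [(false, false, false), (false, false, true), (false, true, false), (false, true, true), (true, false, false), (true, true, false), (true, true, true), (true, false, true)]
  | (true, true, false) => [(false, false, false), (false, false, true), (false, true, false), (false, true, true), (true, false, false), (true, false, true), (true, true, true), (true, true, false)]
  | (true, true, true) => [(false, false, false), (false, false, true), (false, true, false), (false, true, true), (true, false, false), (true, false, true), (true, true, false), (true, true, true)]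
  | _ => []

def bpath : VB → List VB
  | ((false, false), (false, false, true)) => [((false, false), (false, false, false)), ((false, false), (true, true, true)), ((false, false), (true, false, false)), ((false, false), (true, false, true)), ((false, false), (true, true, false)), ((true, false), (true, true, false)), ((true, false), (true, false, false)), ((true, false), (true, false, true)), ((true, false), (true, true, true)), ((true, false), (false, false, false)), ((true, false), (false, true, true)), ((true, false), (false, false, true)), ((true, false), (false, true, false)), ((false, false), (false, true, false)), ((false, false), (false, true, true)), ((false, true), (false, true, true)), ((false, true), (false, true, false)), ((false, true), (false, false, false)), ((true, true), (false, false, false)), ((true, true), (false, true, false)), ((true, true), (false, true, true)), ((true, true), (false, false, true)), ((true, true), (true, true, false)), ((true, true), (true, false, false)), ((true, true), (true, true, true)), ((true, true), (true, false, true)), ((false, true), (true, false, true)), ((false, true), (true, false, false)), ((false, true), (true, true, true)), ((false, true), (true, true, false)), ((false, true), (false, false, true)), ((false, false), (false, false, true))]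
  | ((false, false), (false, true, false)) => [((false, false), (false, false, false)), ((false, false), (true, true, true)), ((false, false), (true, false, false)), ((false, false), (true, false, true)), ((false, false), (true, true, false)), ((false, false), (false, false, true)), ((false, false), (false, true, true)), ((true, false), (false, true, true)), ((true, false), (false, false, true)), ((true, false), (false, false, false)), ((true, false), (false, true, false)), ((true, false), (true, false, true)), ((true, false), (true, false, false)), ((true, false), (true, true, false)), ((true, false), (true, true, true)), ((true, true), (true, true, true)), ((true, true), (true, false, false)), ((true, true), (true, true, false)), ((true, true), (true, false, true)), ((false, true), (true, false, true)), ((false, true), (true, false, false)), ((false, true), (true, true, false)), ((false, true), (true, true, true)), ((false, true), (false, false, false)), ((false, true), (false, true, true)), ((false, true), (false, false, true)), ((true, true), (false, false, true)), ((true, true), (false, false, false)), ((true, true), (false, true, true)), ((true, true), (false, true, false)), ((false, true), (false, true, false)), ((false, false), (false, true, false))]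
  | ((false, false), (false, true, true)) => [((false, false), (false, false, false)), ((false, false), (true, true, true)), ((false, false), (true, false, false)), ((false, false), (true, false, true)), ((false, false), (true, true, false)), ((false, false), (false, false, true)), ((false, false), (false, true, false)), ((false, true), (false, true, false)), ((false, true), (true, false, true)), ((false, true), (true, true, false)), ((false, true), (false, false, true)), ((false, true), (false, false, false)), ((false, true), (true, true, true)), ((false, true), (true, false, false)), ((false, true), (false, true, true)), ((true, true), (false, true, true)), ((true, true), (false, false, true)), ((true, true), (false, false, false)), ((true, true), (false, true, false)), ((true, false), (false, true, false)), ((true, false), (false, false, true)), ((true, false), (false, false, false)), ((true, false), (true, true, true)), ((true, true), (true, true, true)), ((true, true), (true, false, false)), ((true, true), (true, true, false)), ((true, true), (true, false, true)), ((true, false), (true, false, true)), ((true, false), (true, true, false)), ((true, false), (true, false, false)), ((true, false), (false, true, true)), ((false, false), (false, true, true))]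
  | ((false, false), (true, false, false)) => [((false, false), (false, false, false)), ((false, true), (false, false, false)), ((false, true), (false, false, true)), ((false, false), (false, false, true)), ((false, false), (false, true, true)), ((false, false), (false, true, false)), ((false, true), (false, true, false)), ((false, true), (false, true, true)), ((true, true), (false, true, true)), ((true, true), (false, false, false)), ((true, true), (false, false, true)), ((true, true), (false, true, false)), ((true, false), (false, true, false)), ((true, false), (false, false, false)), ((true, false), (false, true, true)), ((true, false), (false, false, true)), ((true, false), (true, true, false)), ((true, true), (true, true, false)), ((true, true), (true, true, true)), ((true, false), (true, true, true)), ((true, false), (true, false, false)), ((true, false), (true, false, true)), ((true, true), (true, false, true)), ((true, true), (true, false, false)), ((false, true), (true, false, false)), ((false, true), (true, false, true)), ((false, true), (true, true, true)), ((false, true), (true, true, false)), ((false, false), (true, true, false)), ((false, false), (true, true, true)), ((false, false), (true, false, true)), ((false, false), (true, false, false))]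
  | ((false, false), (true, false, true)) => [((false, false), (false, false, false)), ((false, true), (false, false, false)), ((false, true), (false, false, true)), ((false, false), (false, false, true)), ((false, false), (false, true, true)), ((false, false), (false, true, false)), ((false, true), (false, true, false)), ((false, true), (false, true, true)), ((false, true), (true, false, false)), ((false, true), (true, true, false)), ((false, true), (true, false, true)), ((false, true), (true, true, true)), ((false, false), (true, true, true)), ((false, false), (true, false, false)), ((false, false), (true, true, false)), ((true, false), (true, true, false)), ((true, false), (true, false, false)), ((true, false), (true, true, true)), ((true, true), (true, true, true)), ((true, true), (true, false, false)), ((true, true), (true, true, false)), ((true, true), (true, false, true)), ((true, true), (false, true, false)), ((true, true), (false, false, true)), ((true, true), (false, true, true)), ((true, true), (false, false, false)), ((true, false), (false, false, false)), ((true, false), (false, true, true)), ((true, false), (false, false, true)), ((true, false), (false, true, false)), ((true, false), (true, false, true)), ((false, false), (true, false, true))]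
  | ((false, false), (true, true, false)) => [((false, false), (false, false, false)), ((false, true), (false, false, false)), ((false, true), (false, false, true)), ((false, false), (false, false, true)), ((false, false), (false, true, false)), ((false, true), (false, true, false)), ((false, true), (false, true, true)), ((false, false), (false, true, true)), ((true, false), (false, true, true)), ((true, false), (false, false, true)), ((true, false), (false, false, false)), ((true, false), (false, true, false)), ((true, true), (false, true, false)), ((true, true), (false, false, false)), ((true, true), (false, true, true)), ((true, true), (false, false, true)), ((true, true), (true, true, false)), ((true, true), (true, true, true)), ((true, true), (true, false, true)), ((true, true), (true, false, false)), ((true, false), (true, false, false)), ((true, false), (true, true, true)), ((true, false), (true, true, false)), ((true, false), (true, false, true)), ((false, false), (true, false, true)), ((false, true), (true, false, true)), ((false, true), (true, true, false)), ((false, true), (true, false, false)), ((false, true), (true, true, true)), ((false, false), (true, true, true)), ((false, false), (true, false, false)), ((false, false), (true, true, false))]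
  | ((false, false), (true, true, true)) => [((false, false), (false, false, false)), ((false, false), (false, true, true)), ((false, false), (false, false, true)), ((false, false), (false, true, false)), ((false, true), (false, true, false)), ((false, true), (false, false, false)), ((false, true), (false, false, true)), ((false, true), (false, true, true)), ((false, true), (true, false, false)), ((false, true), (true, true, false)), ((false, true), (true, false, true)), ((false, true), (true, true, true)), ((true, true), (true, true, true)), ((true, true), (false, false, false)), ((true, true), (false, true, true)), ((true, true), (true, false, false)), ((true, true), (true, true, false)), ((true, true), (false, false, true)), ((true, true), (false, true, false)), ((true, true), (true, false, true)), ((true, false), (true, false, true)), ((false, false), (true, false, true)), ((false, false), (true, false, false)), ((false, false), (true, true, false)), ((true, false), (true, true, false)), ((true, false), (true, false, false)), ((true, false), (false, true, true)), ((true, false), (false, false, true)), ((true, false), (false, true, false)), ((true, false), (false, false, false)), ((true, false), (true, true, true)), ((false, false), (true, true, true))]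
  | ((false, true), (false, false, false)) => [((false, false), (false, false, false)), ((false, false), (false, true, true)), ((false, false), (false, false, true)), ((false, false), (false, true, false)), ((false, true), (false, true, false)), ((false, true), (false, true, true)), ((false, true), (false, false, true)), ((true, true), (false, false, true)), ((true, true), (false, true, true)), ((true, true), (false, true, false)), ((true, true), (false, false, false)), ((true, false), (false, false, false)), ((true, false), (false, false, true)), ((true, false), (false, true, false)), ((true, false), (false, true, true)), ((true, false), (true, false, false)), ((true, false), (true, true, false)), ((true, false), (true, false, true)), ((true, false), (true, true, true)), ((false, false), (true, true, true)), ((false, false), (true, false, true)), ((false, false), (true, true, false)), ((false, false), (true, false, false)), ((false, true), (true, false, false)), ((false, true), (true, true, false)), ((false, true), (true, false, true)), ((true, true), (true, false, true)), ((true, true), (true, false, false)), ((true, true), (true, true, false)), ((true, true), (true, true, true)), ((false, true), (true, true, true)), ((false, true), (false, false, false))]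
  | ((false, true), (false, false, true)) => [((false, false), (false, false, false)), ((false, true), (false, false, false)), ((false, true), (false, true, false)), ((false, true), (false, true, true)), ((false, false), (false, true, true)), ((false, false), (false, true, false)), ((false, false), (false, false, true)), ((true, false), (false, false, true)), ((true, false), (false, true, false)), ((true, false), (false, false, false)), ((true, false), (false, true, true)), ((true, true), (false, true, true)), ((true, true), (false, false, false)), ((true, true), (false, true, false)), ((true, true), (false, false, true)), ((true, true), (true, true, false)), ((true, true), (true, false, false)), ((true, true), (true, true, true)), ((true, true), (true, false, true)), ((false, true), (true, false, true)), ((false, true), (true, false, false)), ((false, true), (true, true, true)), ((false, false), (true, true, true)), ((true, false), (true, true, true)), ((true, false), (true, false, false)), ((true, false), (true, true, false)), ((true, false), (true, false, true)), ((false, false), (true, false, true)), ((false, false), (true, false, false)), ((false, false), (true, true, false)), ((false, true), (true, true, false)), ((false, true), (false, false, true))]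
  | ((false, true), (false, true, false)) => [((false, false), (false, false, false)), ((false, true), (false, false, false)), ((false, true), (false, false, true)), ((false, true), (false, true, true)), ((false, false), (false, true, true)), ((false, false), (false, false, true)), ((false, false), (false, true, false)), ((true, false), (false, true, false)), ((true, false), (false, false, true)), ((true, false), (false, false, false)), ((true, false), (false, true, true)), ((true, true), (false, true, true)), ((true, true), (false, false, false)), ((true, true), (false, false, true)), ((true, true), (false, true, false)), ((true, true), (true, false, true)), ((true, true), (true, false, false)), ((true, true), (true, true, true)), ((true, true), (true, true, false)), ((false, true), (true, true, false)), ((false, true), (true, false, false)), ((false, true), (true, true, true)), ((false, false), (true, true, true)), ((true, false), (true, true, true)), ((true, false), (true, false, false)), ((true, false), (true, false, true)), ((true, false), (true, true, false)), ((false, false), (true, true, false)), ((false, false), (true, false, false)), ((false, false), (true, false, true)), ((false, true), (true, false, true)), ((false, true), (false, true, false))]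
  | ((false, true), (false, true, true)) => [((false, false), (false, false, false)), ((false, true), (false, false, false)), ((false, true), (false, false, true)), ((false, true), (false, true, false)), ((false, false), (false, true, false)), ((false, false), (false, false, true)), ((false, false), (false, true, true)), ((true, false), (false, true, true)), ((true, false), (false, false, true)), ((true, false), (false, false, false)), ((true, false), (false, true, false)), ((true, true), (false, true, false)), ((true, true), (false, false, false)), ((true, true), (false, false, true)), ((true, true), (false, true, true)), ((true, true), (true, false, false)), ((true, true), (true, false, true)), ((true, true), (true, true, true)), ((true, true), (true, true, false)), ((false, true), (true, true, false)), ((false, true), (true, false, true)), ((false, true), (true, true, true)), ((false, false), (true, true, true)), ((true, false), (true, true, true)), ((true, false), (true, false, false)), ((true, false), (true, true, false)), ((true, false), (true, false, true)), ((false, false), (true, false, true)), ((false, false), (true, true, false)), ((false, false), (true, false, false)), ((false, true), (true, false, false)), ((false, true), (false, true, true))]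
  | ((false, true), (true, false, false)) => [((false, false), (false, false, false)), ((false, true), (false, false, false)), ((false, true), (false, false, true)), ((false, false), (false, false, true)), ((false, false), (false, true, true)), ((false, false), (false, true, false)), ((false, true), (false, true, false)), ((false, true), (false, true, true)), ((true, true), (false, true, true)), ((true, true), (false, false, false)), ((true, true), (false, false, true)), ((true, true), (false, true, false)), ((true, false), (false, true, false)), ((true, false), (false, false, false)), ((true, false), (false, true, true)), ((true, false), (false, false, true)), ((true, false), (true, true, false)), ((true, true), (true, true, false)), ((true, true), (true, true, true)), ((true, false), (true, true, true)), ((true, false), (true, false, false)), ((true, false), (true, false, true)), ((false, false), (true, false, true)), ((false, false), (true, true, true)), ((false, false), (true, false, false)), ((false, false), (true, true, false)), ((false, true), (true, true, false)), ((false, true), (true, true, true)), ((false, true), (true, false, true)), ((true, true), (true, false, true)), ((true, true), (true, false, false)), ((false, true), (true, false, false))]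
  | ((false, true), (true, false, true)) => [((false, false), (false, false, false)), ((false, true), (false, false, false)), ((false, true), (false, false, true)), ((false, false), (false, false, true)), ((false, false), (false, true, true)), ((false, false), (false, true, false)), ((false, true), (false, true, false)), ((false, true), (false, true, true)), ((false, true), (true, false, false)), ((false, true), (true, true, false)), ((false, true), (true, true, true)), ((false, false), (true, true, true)), ((false, false), (true, false, false)), ((false, false), (true, true, false)), ((false, false), (true, false, true)), ((true, false), (true, false, true)), ((true, false), (true, true, false)), ((true, false), (true, false, false)), ((true, false), (true, true, true)), ((true, false), (false, false, false)), ((true, false), (false, true, false)), ((true, false), (false, true, true)), ((true, false), (false, false, true)), ((true, true), (false, false, true)), ((true, true), (false, true, true)), ((true, true), (false, true, false)), ((true, true), (false, false, false)), ((true, true), (true, true, true)), ((true, true), (true, true, false)), ((true, true), (true, false, false)), ((true, true), (true, false, true)), ((false, true), (true, false, true))]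
  | ((false, true), (true, true, false)) => [((false, false), (false, false, false)), ((false, true), (false, false, false)), ((false, true), (false, false, true)), ((false, false), (false, false, true)), ((false, false), (false, true, true)), ((false, false), (false, true, false)), ((false, true), (false, true, false)), ((false, true), (false, true, true)), ((false, true), (true, false, false)), ((false, true), (true, false, true)), ((false, true), (true, true, true)), ((false, false), (true, true, true)), ((false, false), (true, false, false)), ((false, false), (true, false, true)), ((false, false), (true, true, false)), ((true, false), (true, true, false)), ((true, false), (true, false, true)), ((true, false), (true, false, false)), ((true, false), (true, true, true)), ((true, false), (false, false, false)), ((true, false), (false, true, false)), ((true, false), (false, true, true)), ((true, false), (false, false, true)), ((true, true), (false, false, true)), ((true, true), (false, true, true)), ((true, true), (false, false, false)), ((true, true), (false, true, false)), ((true, true), (true, false, true)), ((true, true), (true, false, false)), ((true, true), (true, true, true)), ((true, true), (true, true, false)), ((false, true), (true, true, false))]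
  | ((false, true), (true, true, true)) => [((false, false), (false, false, false)), ((false, true), (false, false, false)), ((false, true), (false, false, true)), ((false, false), (false, false, true)), ((false, false), (false, true, true)), ((false, false), (false, true, false)), ((false, true), (false, true, false)), ((false, true), (false, true, true)), ((false, true), (true, false, false)), ((false, true), (true, false, true)), ((false, true), (true, true, false)), ((false, false), (true, true, false)), ((false, false), (true, false, false)), ((false, false), (true, false, true)), ((false, false), (true, true, true)), ((true, false), (true, true, true)), ((true, false), (true, false, true)), ((true, false), (true, false, false)), ((true, false), (true, true, false)), ((true, false), (false, false, true)), ((true, false), (false, true, false)), ((true, false), (false, true, true)), ((true, false), (false, false, false)), ((true, true), (false, false, false)), ((true, true), (false, true, true)), ((true, true), (false, false, true)), ((true, true), (false, true, false)), ((true, true), (true, false, true)), ((true, true), (true, false, false)), ((true, true), (true, true, false)), ((true, true), (true, true, true)), ((false, true), (true, true, true))]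
  | ((true, false), (false, false, false)) => [((false, false), (false, false, false)), ((false, false), (false, true, true)), ((false, false), (false, false, true)), ((false, false), (false, true, false)), ((false, true), (false, true, false)), ((false, true), (false, false, false)), ((false, true), (false, false, true)), ((false, true), (false, true, true)), ((false, true), (true, false, false)), ((false, true), (true, true, false)), ((false, true), (true, false, true)), ((false, true), (true, true, true)), ((false, false), (true, true, true)), ((false, false), (true, false, true)), ((false, false), (true, true, false)), ((false, false), (true, false, false)), ((true, false), (true, false, false)), ((true, false), (true, true, false)), ((true, false), (true, false, true)), ((true, false), (true, true, true)), ((true, true), (true, true, true)), ((true, true), (true, false, true)), ((true, true), (true, false, false)), ((true, true), (true, true, false)), ((true, true), (false, false, true)), ((true, true), (false, true, false)), ((true, true), (false, false, false)), ((true, true), (false, true, true)), ((true, false), (false, true, true)), ((true, false), (false, true, false)), ((true, false), (false, false, true)), ((true, false), (false, false, false))]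
  | ((true, false), (false, false, true)) => [((false, false), (false, false, false)), ((false, true), (false, false, false)), ((false, true), (false, false, true)), ((false, false), (false, false, true)), ((false, false), (false, true, false)), ((false, true), (false, true, false)), ((false, true), (false, true, true)), ((false, false), (false, true, true)), ((true, false), (false, true, true)), ((true, true), (false, true, true)), ((true, true), (false, false, false)), ((true, false), (false, false, false)), ((true, false), (false, true, false)), ((true, true), (false, true, false)), ((true, true), (false, false, true)), ((true, true), (true, true, false)), ((true, true), (true, false, false)), ((true, true), (true, true, true)), ((true, true), (true, false, true)), ((false, true), (true, false, true)), ((false, true), (true, false, false)), ((false, true), (true, true, false)), ((false, true), (true, true, true)), ((false, false), (true, true, true)), ((false, false), (true, true, false)), ((false, false), (true, false, false)), ((false, false), (true, false, true)), ((true, false), (true, false, true)), ((true, false), (true, false, false)), ((true, false), (true, true, true)), ((true, false), (true, true, false)), ((true, false), (false, false, true))]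
  | ((true, false), (false, true, false)) => [((false, false), (false, false, false)), ((false, true), (false, false, false)), ((false, true), (false, false, true)), ((false, false), (false, false, true)), ((false, false), (false, true, true)), ((false, false), (false, true, false)), ((false, true), (false, true, false)), ((false, true), (false, true, true)), ((false, true), (true, false, false)), ((false, true), (true, true, false)), ((false, true), (true, false, true)), ((false, true), (true, true, true)), ((false, false), (true, true, true)), ((false, false), (true, false, true)), ((false, false), (true, true, false)), ((false, false), (true, false, false)), ((true, false), (true, false, false)), ((true, false), (true, true, false)), ((true, false), (true, false, true)), ((true, false), (true, true, true)), ((true, true), (true, true, true)), ((true, true), (true, false, true)), ((true, true), (true, false, false)), ((true, true), (true, true, false)), ((true, true), (false, false, true)), ((true, true), (false, true, false)), ((true, true), (false, false, false)), ((true, true), (false, true, true)), ((true, false), (false, true, true)), ((true, false), (false, false, false)), ((true, false), (false, false, true)), ((true, false), (false, true, false))]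
  | ((true, false), (false, true, true)) => [((false, false), (false, false, false)), ((false, true), (false, false, false)), ((false, true), (false, false, true)), ((false, false), (false, false, true)), ((false, false), (false, true, true)), ((false, false), (false, true, false)), ((false, true), (false, true, false)), ((false, true), (false, true, true)), ((true, true), (false, true, true)), ((true, true), (false, false, false)), ((true, true), (false, false, true)), ((true, true), (false, true, false)), ((true, false), (false, true, false)), ((true, false), (false, false, false)), ((true, false), (false, false, true)), ((true, false), (true, true, false)), ((true, false), (true, false, true)), ((true, false), (true, true, true)), ((true, true), (true, true, true)), ((true, true), (true, true, false)), ((true, true), (true, false, true)), ((true, true), (true, false, false)), ((false, true), (true, false, false)), ((false, true), (true, true, false)), ((false, true), (true, true, true)), ((false, true), (true, false, true)), ((false, false), (true, false, true)), ((false, false), (true, true, false)), ((false, false), (true, true, true)), ((false, false), (true, false, false)), ((true, false), (true, false, false)), ((true, false), (false, true, true))]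
  | ((true, false), (true, false, false)) => [((false, false), (false, false, false)), ((false, true), (false, false, false)), ((false, true), (false, false, true)), ((false, false), (false, false, true)), ((false, false), (false, true, true)), ((false, false), (false, true, false)), ((false, true), (false, true, false)), ((false, true), (false, true, true)), ((false, true), (true, false, false)), ((false, true), (true, true, false)), ((false, true), (true, false, true)), ((false, true), (true, true, true)), ((false, false), (true, true, true)), ((false, false), (true, false, true)), ((false, false), (true, false, false)), ((false, false), (true, true, false)), ((true, false), (true, true, false)), ((true, false), (true, false, true)), ((true, false), (true, true, true)), ((true, false), (false, false, false)), ((true, false), (false, true, false)), ((true, false), (false, false, true)), ((true, false), (false, true, true)), ((true, true), (false, true, true)), ((true, true), (false, true, false)), ((true, true), (false, false, true)), ((true, true), (false, false, false)), ((true, true), (true, true, true)), ((true, true), (true, true, false)), ((true, true), (true, false, true)), ((true, true), (true, false, false)), ((true, false), (true, false, false))]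
  | ((true, false), (true, false, true)) => [((false, false), (false, false, false)), ((false, true), (false, false, false)), ((false, true), (false, false, true)), ((false, false), (false, false, true)), ((false, false), (false, true, true)), ((false, false), (false, true, false)), ((false, true), (false, true, false)), ((false, true), (false, true, true)), ((false, true), (true, false, false)), ((false, true), (true, true, false)), ((false, true), (true, false, true)), ((false, true), (true, true, true)), ((false, false), (true, true, true)), ((false, false), (true, false, true)), ((false, false), (true, true, false)), ((false, false), (true, false, false)), ((true, false), (true, false, false)), ((true, true), (true, false, false)), ((true, true), (true, true, true)), ((true, true), (true, false, true)), ((true, true), (true, true, false)), ((true, false), (true, true, false)), ((true, false), (true, true, true)), ((true, false), (false, false, false)), ((true, false), (false, true, true)), ((true, false), (false, false, true)), ((true, true), (false, false, true)), ((true, true), (false, false, false)), ((true, true), (false, true, true)), ((true, true), (false, true, false)), ((true, false), (false, true, false)), ((true, false), (true, false, true))]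
  | ((true, false), (true, true, false)) => [((false, false), (false, false, false)), ((false, true), (false, false, false)), ((false, true), (false, false, true)), ((false, false), (false, false, true)), ((false, false), (false, true, true)), ((false, false), (false, true, false)), ((false, true), (false, true, false)), ((false, true), (false, true, true)), ((false, true), (true, false, false)), ((false, true), (true, true, false)), ((false, true), (true, false, true)), ((false, true), (true, true, true)), ((false, false), (true, true, true)), ((false, false), (true, false, true)), ((false, false), (true, true, false)), ((false, false), (true, false, false)), ((true, false), (true, false, false)), ((true, true), (true, false, false)), ((true, true), (true, true, true)), ((true, true), (true, false, true)), ((true, true), (true, true, false)), ((true, true), (false, false, true)), ((true, true), (false, false, false)), ((true, true), (false, true, true)), ((true, true), (false, true, false)), ((true, false), (false, true, false)), ((true, false), (true, false, true)), ((true, false), (true, true, true)), ((true, false), (false, false, false)), ((true, false), (false, true, true)), ((true, false), (false, false, true)), ((true, false), (true, true, false))]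
  | ((true, false), (true, true, true)) => [((false, false), (false, false, false)), ((false, true), (false, false, false)), ((false, true), (false, false, true)), ((false, false), (false, false, true)), ((false, false), (false, true, true)), ((false, false), (false, true, false)), ((false, true), (false, true, false)), ((false, true), (false, true, true)), ((false, true), (true, false, false)), ((false, true), (true, true, false)), ((false, true), (true, false, true)), ((false, true), (true, true, true)), ((false, false), (true, true, true)), ((false, false), (true, false, false)), ((false, false), (true, true, false)), ((false, false), (true, false, true)), ((true, false), (true, false, true)), ((true, false), (true, false, false)), ((true, false), (true, true, false)), ((true, false), (false, false, true)), ((true, false), (false, true, true)), ((true, false), (false, true, false)), ((true, false), (false, false, false)), ((true, true), (false, false, false)), ((true, true), (false, true, true)), ((true, true), (false, false, true)), ((true, true), (false, true, false)), ((true, true), (true, false, true)), ((true, true), (true, true, false)), ((true, true), (true, false, false)), ((true, true), (true, true, true)), ((true, false), (true, true, true))]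
  | ((true, true), (false, false, false)) => [((false, false), (false, false, false)), ((false, true), (false, false, false)), ((false, true), (false, false, true)), ((false, false), (false, false, true)), ((false, false), (false, true, true)), ((false, false), (false, true, false)), ((false, true), (false, true, false)), ((false, true), (false, true, true)), ((false, true), (true, false, false)), ((false, true), (true, true, false)), ((false, true), (true, false, true)), ((false, true), (true, true, true)), ((false, false), (true, true, true)), ((false, false), (true, false, true)), ((false, false), (true, true, false)), ((false, false), (true, false, false)), ((true, false), (true, false, false)), ((true, false), (true, true, false)), ((true, false), (true, false, true)), ((true, false), (true, true, true)), ((true, true), (true, true, true)), ((true, true), (true, true, false)), ((true, true), (true, false, false)), ((true, true), (true, false, true)), ((true, true), (false, true, false)), ((true, false), (false, true, false)), ((true, false), (false, true, true)), ((true, false), (false, false, false)), ((true, false), (false, false, true)), ((true, true), (false, false, true)), ((true, true), (false, true, true)), ((true, true), (false, false, false))]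
  | ((true, true), (false, false, true)) => [((false, false), (false, false, false)), ((false, true), (false, false, false)), ((false, true), (false, false, true)), ((false, false), (false, false, true)), ((false, false), (false, true, true)), ((false, false), (false, true, false)), ((false, true), (false, true, false)), ((false, true), (false, true, true)), ((false, true), (true, false, false)), ((false, true), (true, true, false)), ((false, true), (true, false, true)), ((false, true), (true, true, true)), ((false, false), (true, true, true)), ((false, false), (true, false, true)), ((false, false), (true, true, false)), ((false, false), (true, false, false)), ((true, false), (true, false, false)), ((true, false), (true, true, false)), ((true, false), (true, false, true)), ((true, false), (true, true, true)), ((true, true), (true, true, true)), ((true, true), (true, true, false)), ((true, true), (true, false, true)), ((true, true), (true, false, false)), ((true, true), (false, true, true)), ((true, false), (false, true, true)), ((true, false), (false, true, false)), ((true, false), (false, false, true)), ((true, false), (false, false, false)), ((true, true), (false, false, false)), ((true, true), (false, true, false)), ((true, true), (false, false, true))]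
  | ((true, true), (false, true, false)) => [((false, false), (false, false, false)), ((false, true), (false, false, false)), ((false, true), (false, false, true)), ((false, false), (false, false, true)), ((false, false), (false, true, true)), ((false, false), (false, true, false)), ((false, true), (false, true, false)), ((false, true), (false, true, true)), ((false, true), (true, false, false)), ((false, true), (true, true, false)), ((false, true), (true, false, true)), ((false, true), (true, true, true)), ((false, false), (true, true, true)), ((false, false), (true, false, true)), ((false, false), (true, true, false)), ((false, false), (true, false, false)), ((true, false), (true, false, false)), ((true, false), (true, true, false)), ((true, false), (true, false, true)), ((true, false), (true, true, true)), ((true, true), (true, true, true)), ((true, true), (true, true, false)), ((true, true), (true, false, true)), ((true, true), (true, false, false)), ((true, true), (false, true, true)), ((true, true), (false, false, false)), ((true, true), (false, false, true)), ((true, false), (false, false, true)), ((true, false), (false, false, false)), ((true, false), (false, true, true)), ((true, false), (false, true, false)), ((true, true), (false, true, false))]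
  | ((true, true), (false, true, true)) => [((false, false), (false, false, false)), ((false, true), (false, false, false)), ((false, true), (false, false, true)), ((false, false), (false, false, true)), ((false, false), (false, true, true)), ((false, false), (false, true, false)), ((false, true), (false, true, false)), ((false, true), (false, true, true)), ((false, true), (true, false, false)), ((false, true), (true, false, true)), ((false, true), (true, true, false)), ((false, true), (true, true, true)), ((false, false), (true, true, true)), ((false, false), (true, false, false)), ((false, false), (true, true, false)), ((false, false), (true, false, true)), ((true, false), (true, false, true)), ((true, true), (true, false, true)), ((true, true), (true, true, true)), ((true, true), (true, false, false)), ((true, true), (true, true, false)), ((true, false), (true, true, false)), ((true, false), (true, false, false)), ((true, false), (true, true, true)), ((true, false), (false, false, false)), ((true, true), (false, false, false)), ((true, true), (false, true, false)), ((true, false), (false, true, false)), ((true, false), (false, true, true)), ((true, false), (false, false, true)), ((true, true), (false, false, true)), ((true, true), (false, true, true))]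
  | ((true, true), (true, false, false)) => [((false, false), (false, false, false)), ((false, true), (false, false, false)), ((false, true), (false, false, true)), ((false, false), (false, false, true)), ((false, false), (false, true, true)), ((false, false), (false, true, false)), ((false, true), (false, true, false)), ((false, true), (false, true, true)), ((false, true), (true, false, false)), ((false, true), (true, false, true)), ((false, true), (true, true, false)), ((false, true), (true, true, true)), ((false, false), (true, true, true)), ((false, false), (true, false, false)), ((false, false), (true, true, false)), ((false, false), (true, false, true)), ((true, false), (true, false, true)), ((true, true), (true, false, true)), ((true, true), (true, true, true)), ((true, false), (true, true, true)), ((true, false), (true, false, false)), ((true, false), (true, true, false)), ((true, true), (true, true, false)), ((true, true), (false, false, true)), ((true, true), (false, true, false)), ((true, true), (false, false, false)), ((true, false), (false, false, false)), ((true, false), (false, true, false)), ((true, false), (false, false, true)), ((true, false), (false, true, true)), ((true, true), (false, true, true)), ((true, true), (true, false, false))]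
  | ((true, true), (true, false, true)) => [((false, false), (false, false, false)), ((false, true), (false, false, false)), ((false, true), (false, false, true)), ((false, false), (false, false, true)), ((false, false), (false, true, true)), ((false, false), (false, true, false)), ((false, true), (false, true, false)), ((false, true), (false, true, true)), ((false, true), (true, false, false)), ((false, true), (true, true, false)), ((false, true), (true, false, true)), ((false, true), (true, true, true)), ((false, false), (true, true, true)), ((false, false), (true, false, true)), ((false, false), (true, true, false)), ((false, false), (true, false, false)), ((true, false), (true, false, false)), ((true, false), (true, true, false)), ((true, false), (true, false, true)), ((true, false), (true, true, true)), ((true, true), (true, true, true)), ((true, true), (true, false, false)), ((true, true), (true, true, false)), ((true, true), (false, false, true)), ((true, true), (false, false, false)), ((true, true), (false, true, true)), ((true, false), (false, true, true)), ((true, false), (false, false, false)), ((true, false), (false, false, true)), ((true, false), (false, true, false)), ((true, true), (false, true, false)), ((true, true), (true, false, true))]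
  | ((true, true), (true, true, false)) => [((false, false), (false, false, false)), ((false, true), (false, false, false)), ((false, true), (false, false, true)), ((false, false), (false, false, true)), ((false, false), (false, true, true)), ((false, false), (false, true, false)), ((false, true), (false, true, false)), ((false, true), (false, true, true)), ((false, true), (true, false, false)), ((false, true), (true, true, false)), ((false, true), (true, true, true)), ((false, true), (true, false, true)), ((false, false), (true, false, true)), ((false, false), (true, true, false)), ((false, false), (true, true, true)), ((false, false), (true, false, false)), ((true, false), (true, false, false)), ((true, false), (true, true, false)), ((true, false), (true, false, true)), ((true, false), (true, true, true)), ((true, true), (true, true, true)), ((true, true), (true, false, false)), ((true, true), (true, false, true)), ((true, true), (false, true, false)), ((true, false), (false, true, false)), ((true, false), (false, false, true)), ((true, false), (false, false, false)), ((true, false), (false, true, true)), ((true, true), (false, true, true)), ((true, true), (false, false, false)), ((true, true), (false, false, true)), ((true, true), (true, true, false))]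
  | ((true, true), (true, true, true)) => [((false, false), (false, false, false)), ((false, true), (false, false, false)), ((false, true), (false, false, true)), ((false, false), (false, false, true)), ((false, false), (false, true, true)), ((false, false), (false, true, false)), ((false, true), (false, true, false)), ((false, true), (false, true, true)), ((false, true), (true, false, false)), ((false, true), (true, true, false)), ((false, true), (true, false, true)), ((false, true), (true, true, true)), ((false, false), (true, true, true)), ((false, false), (true, false, false)), ((false, false), (true, true, false)), ((false, false), (true, false, true)), ((true, false), (true, false, true)), ((true, true), (true, false, true)), ((true, true), (true, true, false)), ((true, false), (true, true, false)), ((true, false), (true, false, false)), ((true, false), (true, true, true)), ((true, false), (false, false, false)), ((true, false), (false, true, true)), ((true, false), (false, true, false)), ((true, false), (false, false, true)), ((true, true), (false, false, true)), ((true, true), (false, true, false)), ((true, true), (false, false, false)), ((true, true), (false, true, true)), ((true, true), (true, false, false)), ((true, true), (true, true, true))]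
  | _ => []

lemma g3path_spec : ∀ d : V3, d ≠ z3 →
    chainB g3adjB (g3path d) = true ∧ (g3path d).head? = some z3 ∧
    (g3path d).getLast? = some d ∧ ∀ x : V3, (g3path d).count x = 1 := by decide

lemma bpath_spec : ∀ d : VB, d ≠ zB →
    chainB badjB (bpath d) = true ∧ (bpath d).head? = some zB ∧
    (bpath d).getLast? = some d ∧ ∀ x : VB, (bpath d).count x = 1 := by decide

lemma hamConn_G3 : HamConn G3 := by
  intro u v huv
  have hd : xor3 u v ≠ z3 := fun h => huv ((xor3_eq_zero u v).mp h)
  obtain ⟨hc, hh, hl, hcount⟩ := g3path_spec _ hd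
  obtain ⟨p, hsup⟩ := walkOfList _ _ _ (chain'_of_chainB g3adjB_adj _ hc) hh hl
  have hham : p.IsHamiltonian := by
    intro x
    rw [hsup, ← count_instances]
    exact hcount x
  refine ⟨(p.map (trG3 u).toHom).copy ?_ ?_, ?_⟩
  · exact xor3_zero u
  · exact xor3_invol u v
  · intro x
    erw [SimpleGraph.Walk.support_copy]
    exact hham.map _ (trG3 u).toEquiv.bijective x

lemma hamConn_B : HamConn (Q2 □ G3) := by
  intro u v huv
  have hd : xorB u v ≠ zB := fun h => huv ((xorB_eq_zero u v).mp h)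
  obtain ⟨hc, hh, hl, hcount⟩ := bpath_spec _ hd
  obtain ⟨p, hsup⟩ := walkOfList _ _ _ (chain'_of_chainB badjB_adj _ hc) hh hl
  have hham : p.IsHamiltonian := by
    intro x
    rw [hsup, ← count_instances]
    exact hcount x
  refine ⟨(p.map (trB u).toHom).copy ?_ ?_, ?_⟩
  · exact xorB_zero u
  · exact xorB_invol u v
  · intro x
    erw [SimpleGraph.Walk.support_copy]
    exact hham.map _ (trB u).toEquiv.bijective x

lemma h3_V3 : ∀ x y : V3, ∃ z : V3, z ≠ x ∧ z ≠ y := by decide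


/-! ### Structure of `ssqRel` -/

def D0 (u v : ℕ → Bool) : Prop :=
  (∀ i, 2 ≤ i → u i = v i) ∧ ((u 0 = v 0) ↔ ¬ (u 1 = v 1))

def DJ (j : ℕ) (u v : ℕ → Bool) : Prop :=
  (∀ i, (i < 4*j-2 ∨ 4*j+1 < i) → u i = v i) ∧
  (xor (u (4*j+1)) (v (4*j+1)), xor (u (4*j)) (v (4*j)),
   xor (u (4*j-1)) (v (4*j-1)), xor (u (4*j-2)) (v (4*j-2))) ∈ V00

lemma ssqRel_iff (n : ℕ) (u v : ℕ → Bool) :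
    ssqRel n u v ↔ D0 u v ∨ ∃ j, 1 ≤ j ∧ j ≤ (n-2)/4 ∧ DJ j u v := Iff.rfl

lemma mem_V00_iff (x : Bool × Bool × Bool × Bool) :
    x ∈ V00 ↔ (x = (true,true,true,true) ∨ x = (false,false,false,true) ∨
      x = (false,false,true,false) ∨ x = (false,false,true,true)) := by
  simp [V00, Set.mem_insert_iff, Set.mem_singleton_iff]

lemma V00_g3 : ∀ p q r s : Bool, p = q →
    ((p, q, r, s) ∈ V00 ↔ g3pat (q, r, s) = true) := by
  intro p q r s h
  subst h
  rw [mem_V00_iff]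
  revert p r s
  decide

lemma D0_symm {u v : ℕ → Bool} (h : D0 u v) : D0 v u := by
  refine ⟨fun i hi => (h.1 i hi).symm, ?_⟩
  rw [show (v 0 = u 0) = (u 0 = v 0) from propext eq_comm,
    show (v 1 = u 1) = (u 1 = v 1) from propext eq_comm]
  exact h.2

lemma DJ_symm {j : ℕ} {u v : ℕ → Bool} (h : DJ j u v) : DJ j v u := by
  refine ⟨fun i hi => (h.1 i hi).symm, ?_⟩
  rw [Bool.xor_comm (v (4*j+1)), Bool.xor_comm (v (4*j)), Bool.xor_comm (v (4*j-1)),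
    Bool.xor_comm (v (4*j-2))]
  exact h.2

lemma ssqRel_symm {n : ℕ} {u v : ℕ → Bool} (h : ssqRel n u v) : ssqRel n v u := by
  rw [ssqRel_iff] at h ⊢
  rcases h with h | ⟨j, h1, h2, h3⟩
  · exact Or.inl (D0_symm h)
  · exact Or.inr ⟨j, h1, h2, DJ_symm h3⟩

lemma ssq_adj_iff {n : ℕ} {u v : SSQVertex n} :
    (SSQ n).Adj u v ↔ u ≠ v ∧ ssqRel n u.1 v.1 := by
  rw [SSQ, SimpleGraph.fromRel_adj]
  constructor
  · rintro ⟨hne, h | h⟩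
    · exact ⟨hne, h⟩
    · exact ⟨hne, ssqRel_symm h⟩
  · rintro ⟨hne, h⟩
    exact ⟨hne, Or.inl h⟩

lemma ssqv_ne {n : ℕ} {u v : SSQVertex n} (i : ℕ) (h : u.1 i ≠ v.1 i) : u ≠ v :=
  fun e => h (congrFun (congrArg Subtype.val e) i)

/-! ### `SSQ 2 ≃g Q2` -/

def e2 : SSQVertex 2 ≃ V2 where
  toFun u := (u.1 1, u.1 0)
  invFun p := ⟨fun i => if i = 0 then p.2 else if i = 1 then p.1 else false,
    fun i hi => by
      show (if i = 0 then p.2 else if i = 1 then p.1 else false) = false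
      rw [if_neg (by omega), if_neg (by omega)],
    fun j hj1 hj2 => by
      exfalso; omega⟩
  left_inv u := by
    apply Subtype.ext
    funext i
    match i with
    | 0 => rfl
    | 1 => rfl
    | (i+2) =>
      show false = u.1 (i+2)
      exact (u.2.1 (i+2) (by omega)).symm
  right_inv p := rfl

lemma q2pat_iff : ∀ a b c d : Bool,
    q2pat (xor a c, xor b d) = true ↔ ((b = d) ↔ ¬ (a = c)) := by decide

lemma q2pat_ne : ∀ a b c d : Bool, q2pat (xor a c, xor b d) = true → ¬(a = c ∧ b = d) := by
  decide

def iso2 : SSQ 2 ≃g Q2 where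
  toEquiv := e2
  map_rel_iff' := by
    intro u v
    show Q2.Adj (e2 u) (e2 v) ↔ (SSQ 2).Adj u v
    rw [ssq_adj_iff]
    show q2pat (xor2 (u.1 1, u.1 0) (v.1 1, v.1 0)) = true ↔ _
    show q2pat (xor (u.1 1) (v.1 1), xor (u.1 0) (v.1 0)) = true ↔ _
    constructor
    · intro h
      have hne := q2pat_ne _ _ _ _ h
      refine ⟨?_, Or.inl ⟨fun i hi => ?_, (q2pat_iff _ _ _ _).mp h⟩⟩
      · by_cases h1 : u.1 1 = v.1 1
        · exact ssqv_ne 0 (fun h0 => hne ⟨h1, h0⟩)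
        · exact ssqv_ne 1 h1
      · match i, hi with
        | (i+2), _ =>
          rw [u.2.1 (i+2) (by omega), v.2.1 (i+2) (by omega)]
    · rintro ⟨hne, h⟩
      rcases h with h | ⟨j, hj1, hj2, _⟩
      · exact (q2pat_iff _ _ _ _).mpr h.2
      · exfalso
        have : (2-2)/4 = 0 := by norm_num
        omega

/-! ### the splitting `SSQ (4t+6) ≃g SSQ (4t+2) □ G3` -/

section Split

variable (t : ℕ)

def loF (f : ℕ → Bool) : ℕ → Bool := fun i => if i < 4*t+2 then f i else false

def hiF (f : ℕ → Bool) : V3 := (f (4*t+4), f (4*t+3), f (4*t+2))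

lemma lo_mem (u : SSQVertex (4*t+6)) :
    (∀ i, 4*t+2 ≤ i → loF t u.1 i = false) ∧
    ∀ j, 1 ≤ j → j ≤ (4*t+2-2)/4 → loF t u.1 (4*j+1) = loF t u.1 (4*j) := by
  constructor
  · intro i hi
    simp only [loF]
    rw [if_neg (by omega)]
  · intro j hj1 hj2
    have hj2' : j ≤ t := by omega
    simp only [loF]
    rw [if_pos (by omega), if_pos (by omega)]
    exact u.2.2 j hj1 (by omega)

def loV (u : SSQVertex (4*t+6)) : SSQVertex (4*t+2) := ⟨loF t u.1, lo_mem t u⟩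

def mkF (w : ℕ → Bool) (p : V3) : ℕ → Bool := fun i =>
  if i < 4*t+2 then w i
  else if i = 4*t+2 then p.2.2
  else if i = 4*t+3 then p.2.1
  else if i ≤ 4*t+5 then p.1
  else false

lemma mk_mem (w : SSQVertex (4*t+2)) (p : V3) :
    (∀ i, 4*t+6 ≤ i → mkF t w.1 p i = false) ∧
    ∀ j, 1 ≤ j → j ≤ (4*t+6-2)/4 → mkF t w.1 p (4*j+1) = mkF t w.1 p (4*j) := by
  constructor
  · intro i hi
    simp only [mkF]
    rw [if_neg (by omega), if_neg (by omega), if_neg (by omega), if_neg (by omega)]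
  · intro j hj1 hj2
    have hj2' : j ≤ t + 1 := by omega
    rcases Nat.lt_or_ge j (t+1) with hj | hj
    · -- j ≤ t : inside the low part
      simp only [mkF]
      rw [if_pos (by omega), if_pos (by omega)]
      exact w.2.2 j hj1 (by omega)
    · -- j = t+1 : both positions give p.1
      have hjeq : j = t+1 := by omega
      subst hjeq
      simp only [mkF]
      rw [if_neg (by omega), if_neg (by omega), if_neg (by omega), if_pos (by omega),
        if_neg (by omega), if_neg (by omega), if_neg (by omega), if_pos (by omega)]

def esplit : SSQVertex (4*t+6) ≃ SSQVertex (4*t+2) × V3 where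
  toFun u := (loV t u, hiF t u.1)
  invFun x := ⟨mkF t x.1.1 x.2, mk_mem t x.1 x.2⟩
  left_inv u := by
    apply Subtype.ext
    funext i
    show mkF t (loF t u.1) (hiF t u.1) i = u.1 i
    simp only [mkF]
    by_cases h1 : i < 4*t+2
    · rw [if_pos h1]
      simp only [loF]
      rw [if_pos h1]
    rw [if_neg h1]
    by_cases h2 : i = 4*t+2
    · rw [if_pos h2]
      simp only [hiF]
      rw [h2]
    rw [if_neg h2]
    by_cases h3 : i = 4*t+3
    · rw [if_pos h3]
      simp only [hiF]
      rw [h3]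
    rw [if_neg h3]
    by_cases h4 : i ≤ 4*t+5
    · rw [if_pos h4]
      simp only [hiF]
      have h45 : i = 4*t+4 ∨ i = 4*t+5 := by omega
      rcases h45 with h | h
      · rw [h]
      · rw [h]
        exact (u.2.2 (t+1) (by omega) (by omega)).symm
    · rw [if_neg h4]
      exact (u.2.1 i (by omega)).symm
  right_inv x := by
    obtain ⟨w, p⟩ := x
    refine Prod.ext ?_ ?_
    · apply Subtype.ext
      funext i
      show loF t (mkF t w.1 p) i = w.1 i
      simp only [loF]
      by_cases h1 : i < 4*t+2
      · rw [if_pos h1]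
        simp only [mkF]
        rw [if_pos h1]
      · rw [if_neg h1]
        exact (w.2.1 i (by omega)).symm
    · have h4 : mkF t w.1 p (4*t+4) = p.1 := by
        simp only [mkF]
        rw [if_neg (by omega), if_neg (by omega), if_neg (by omega), if_pos (by omega)]
      have h3 : mkF t w.1 p (4*t+3) = p.2.1 := by
        simp only [mkF]
        split_ifs <;> first | rfl | omega
      have h2 : mkF t w.1 p (4*t+2) = p.2.2 := by
        simp only [mkF]
        split_ifs <;> first | rfl | omega
      show hiF t (mkF t w.1 p) = p
      rw [hiF, h4, h3, h2]

end Split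


section SplitAdj

variable (t : ℕ)

lemma loF_small {i : ℕ} (f : ℕ → Bool) (h : i < 4*t+2) : loF t f i = f i := if_pos h

lemma loF_big {i : ℕ} (f : ℕ → Bool) (h : ¬ i < 4*t+2) : loF t f i = false := if_neg h

lemma high_eq_iff (u v : SSQVertex (4*t+6)) :
    hiF t u.1 = hiF t v.1 ↔ ∀ i, 4*t+2 ≤ i → u.1 i = v.1 i := by
  constructor
  · intro h i hi
    rw [hiF, hiF, Prod.mk.injEq, Prod.mk.injEq] at h
    obtain ⟨h4, h3, h2⟩ := h
    have hc : i = 4*t+2 ∨ i = 4*t+3 ∨ i = 4*t+4 ∨ i = 4*t+5 ∨ 4*t+6 ≤ i := by omega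
    rcases hc with h | h | h | h | h
    · rw [h]; exact h2
    · rw [h]; exact h3
    · rw [h]; exact h4
    · rw [h]
      have hu := u.2.2 (t+1) (by omega) (by omega)
      have hv := v.2.2 (t+1) (by omega) (by omega)
      have e1 : 4*(t+1)+1 = 4*t+5 := by ring
      have e2 : 4*(t+1) = 4*t+4 := by ring
      rw [e1, e2] at hu hv
      rw [hu, hv]; exact h4
    · rw [u.2.1 i h, v.2.1 i h]
  · intro h
    rw [hiF, hiF]
    rw [h (4*t+4) (by omega), h (4*t+3) (by omega), h (4*t+2) (by omega)]

lemma lo_eq_iff (u v : SSQVertex (4*t+6)) :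
    loF t u.1 = loF t v.1 ↔ ∀ i, i < 4*t+2 → u.1 i = v.1 i := by
  constructor
  · intro h i hi
    have := congrFun h i
    rwa [loF_small t _ hi, loF_small t _ hi] at this
  · intro h
    funext i
    by_cases hi : i < 4*t+2
    · rw [loF_small t _ hi, loF_small t _ hi]; exact h i hi
    · rw [loF_big t _ hi, loF_big t _ hi]

lemma eq_of_lo_hi {u v : SSQVertex (4*t+6)} (hlo : loF t u.1 = loF t v.1)
    (hhi : hiF t u.1 = hiF t v.1) : u = v := by
  apply Subtype.ext
  funext i
  by_cases hi : i < 4*t+2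
  · exact (lo_eq_iff t u v).mp hlo i hi
  · exact (high_eq_iff t u v).mp hhi i (by omega)

lemma g3pat_hi (u v : SSQVertex (4*t+6)) :
    g3pat (xor3 (hiF t u.1) (hiF t v.1)) = true ↔
      (xor (u.1 (4*(t+1)+1)) (v.1 (4*(t+1)+1)), xor (u.1 (4*(t+1))) (v.1 (4*(t+1))),
       xor (u.1 (4*(t+1)-1)) (v.1 (4*(t+1)-1)),
       xor (u.1 (4*(t+1)-2)) (v.1 (4*(t+1)-2))) ∈ V00 := by
  have e1 : 4*(t+1)+1 = 4*t+5 := by ring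
  have e2 : 4*(t+1) = 4*t+4 := by ring
  have e3 : 4*(t+1)-1 = 4*t+3 := by omega
  have e4 : 4*(t+1)-2 = 4*t+2 := by omega
  rw [e1, e3, e4, e2]
  have hu := u.2.2 (t+1) (by omega) (by omega)
  have hv := v.2.2 (t+1) (by omega) (by omega)
  rw [e1, e2] at hu hv
  rw [V00_g3 _ _ _ _ (by rw [hu, hv])]
  rfl

lemma rel_split (u v : SSQVertex (4*t+6)) :
    ssqRel (4*t+6) u.1 v.1 ↔
      ((ssqRel (4*t+2) (loF t u.1) (loF t v.1) ∧ hiF t u.1 = hiF t v.1) ∨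
       (loF t u.1 = loF t v.1 ∧ g3pat (xor3 (hiF t u.1) (hiF t v.1)) = true)) := by
  rw [ssqRel_iff, ssqRel_iff]
  simp only [show (4*t+6-2)/4 = t+1 from by omega, show (4*t+2-2)/4 = t from by omega]
  constructor
  · rintro (h0 | ⟨j, hj1, hj2, hj⟩)
    · -- bottom clause
      refine Or.inl ⟨Or.inl ⟨fun i hi2 => ?_, ?_⟩, ?_⟩
      · by_cases hi : i < 4*t+2
        · rw [loF_small t _ hi, loF_small t _ hi]; exact h0.1 i hi2
        · rw [loF_big t _ hi, loF_big t _ hi]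
      · rw [loF_small t _ (by omega), loF_small t _ (by omega),
          loF_small t _ (by omega), loF_small t _ (by omega)]
        exact h0.2
      · exact (high_eq_iff t u v).mpr (fun i hi => h0.1 i (by omega))
    · rcases Nat.lt_or_ge j (t+1) with hjt | hjt
      · -- middle clause
        refine Or.inl ⟨Or.inr ⟨j, hj1, by omega, fun i hc => ?_, ?_⟩, ?_⟩
        · by_cases hi : i < 4*t+2
          · rw [loF_small t _ hi, loF_small t _ hi]; exact hj.1 i hc
          · rw [loF_big t _ hi, loF_big t _ hi]
        · rw [loF_small t _ (by omega), loF_small t _ (by omega),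
            loF_small t _ (by omega), loF_small t _ (by omega),
            loF_small t _ (by omega), loF_small t _ (by omega),
            loF_small t _ (by omega), loF_small t _ (by omega)]
          exact hj.2
        · exact (high_eq_iff t u v).mpr (fun i hi => hj.1 i (Or.inr (by omega)))
      · -- top clause
        have hjeq : j = t+1 := by omega
        subst hjeq
        refine Or.inr ⟨(lo_eq_iff t u v).mpr (fun i hi => hj.1 i (Or.inl (by omega))), ?_⟩
        rw [g3pat_hi]
        exact hj.2
  · rintro (⟨hl | ⟨j, hj1, hj2, hj⟩, hhi⟩ | ⟨hlo, hg3⟩)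
    · -- bottom clause lifts
      refine Or.inl ⟨fun i hi2 => ?_, ?_⟩
      · by_cases hi : i < 4*t+2
        · have := hl.1 i hi2
          rwa [loF_small t _ hi, loF_small t _ hi] at this
        · exact (high_eq_iff t u v).mp hhi i (by omega)
      · have := hl.2
        rwa [loF_small t _ (by omega), loF_small t _ (by omega),
          loF_small t _ (by omega), loF_small t _ (by omega)] at this
    · -- middle clause lifts
      refine Or.inr ⟨j, hj1, by omega, fun i hc => ?_, ?_⟩
      · by_cases hi : i < 4*t+2
        · have := hj.1 i hc
          rwa [loF_small t _ hi, loF_small t _ hi] at this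
        · exact (high_eq_iff t u v).mp hhi i (by omega)
      · have := hj.2
        rwa [loF_small t _ (by omega), loF_small t _ (by omega),
          loF_small t _ (by omega), loF_small t _ (by omega),
          loF_small t _ (by omega), loF_small t _ (by omega),
          loF_small t _ (by omega), loF_small t _ (by omega)] at this
    · -- top clause lifts
      refine Or.inr ⟨t+1, by omega, by omega, fun i hc => ?_, ?_⟩
      · rcases hc with hc | hc
        · exact (lo_eq_iff t u v).mp hlo i (by omega)
        · rw [u.2.1 i (by omega), v.2.1 i (by omega)]
      · rw [← g3pat_hi]
        exact hg3

lemma split_adj_iff (u v : SSQVertex (4*t+6)) :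
    (SSQ (4*t+6)).Adj u v ↔ (SSQ (4*t+2) □ G3).Adj (esplit t u) (esplit t v) := by
  rw [ssq_adj_iff, SimpleGraph.boxProd_adj]
  have hfst : (esplit t u).1 = loV t u := rfl
  have hsnd : (esplit t u).2 = hiF t u.1 := rfl
  constructor
  · rintro ⟨hne, hrel⟩
    rcases (rel_split t u v).mp hrel with ⟨hl, hhi⟩ | ⟨hlo, hg3⟩
    · left
      refine ⟨ssq_adj_iff.mpr ⟨?_, hl⟩, hhi⟩
      intro he
      exact hne (eq_of_lo_hi t (congrArg Subtype.val he) hhi)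
    · right
      refine ⟨?_, Subtype.ext hlo⟩
      exact hg3
  · rintro (⟨hadj, hhi⟩ | ⟨hadj, hlo⟩)
    · obtain ⟨hne', hl⟩ := ssq_adj_iff.mp hadj
      refine ⟨?_, (rel_split t u v).mpr (Or.inl ⟨hl, hhi⟩)⟩
      intro he
      exact hne' (congrArg (loV t) he)
    · have hg3 : g3pat (xor3 (hiF t u.1) (hiF t v.1)) = true := hadj
      have hlo' : loF t u.1 = loF t v.1 := congrArg Subtype.val hlo
      refine ⟨?_, (rel_split t u v).mpr (Or.inr ⟨hlo', hg3⟩)⟩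
      intro he
      subst he
      exact g3irr (hiF t u.1) hg3

def isoSplit : SSQ (4*t+6) ≃g SSQ (4*t+2) □ G3 where
  toEquiv := esplit t
  map_rel_iff' := by
    intro u v
    exact (split_adj_iff t u v).symm

end SplitAdj


/-! ### Three distinct vertices -/

def zeroV (n : ℕ) : SSQVertex n :=
  ⟨fun _ => false, fun _ _ => rfl, fun _ _ _ => rfl⟩

def bitV (n : ℕ) (p : ℕ) (hp : p < 2) (hn : 2 ≤ n) : SSQVertex n :=
  ⟨fun i => decide (i = p), fun i hi => by simp; omega,
   fun j hj1 hj2 => by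
     have h1 : ¬ (4*j+1 = p) := by omega
     have h2 : ¬ (4*j = p) := by omega
     simp [h1, h2]⟩

lemma exists_third {α : Type*} {a b c : α} (hab : a ≠ b) (hac : a ≠ c) (hbc : b ≠ c) :
    ∀ x y : α, ∃ z : α, z ≠ x ∧ z ≠ y := by
  intro x y
  by_cases hax : a = x
  · subst hax
    by_cases hby : b = y
    · subst hby
      exact ⟨c, hac.symm, hbc.symm⟩
    · exact ⟨b, hab.symm, hby⟩
  · by_cases hay : a = y
    · subst hay
      by_cases hbx : b = x
      · subst hbx
        exact ⟨c, hbc.symm, hac.symm⟩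
      · exact ⟨b, hbx, hab.symm⟩
    · exact ⟨a, hax, hay⟩

lemma h3_ssq (n : ℕ) (hn : 2 ≤ n) : ∀ x y : SSQVertex n, ∃ z, z ≠ x ∧ z ≠ y := by
  have h1 : zeroV n ≠ bitV n 0 (by omega) hn := ssqv_ne 0 (by simp [zeroV, bitV])
  have h2 : zeroV n ≠ bitV n 1 (by omega) hn := ssqv_ne 1 (by simp [zeroV, bitV])
  have h3 : bitV n 0 (by omega) hn ≠ bitV n 1 (by omega) hn := ssqv_ne 0 (by simp [bitV])
  exact exists_third h1 h2 h3

/-! ### congruence of box products -/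

def boxCongr {α α' β β' : Type*} {G : SimpleGraph α} {G' : SimpleGraph α'}
    {H : SimpleGraph β} {H' : SimpleGraph β'} (e1 : G ≃g G') (e2 : H ≃g H') :
    (G □ H) ≃g (G' □ H') where
  toEquiv := Equiv.prodCongr e1.toEquiv e2.toEquiv
  map_rel_iff' := by
    intro x y
    show (G' □ H').Adj (e1 x.1, e2 x.2) (e1 y.1, e2 y.2) ↔ (G □ H).Adj x y
    rw [SimpleGraph.boxProd_adj, SimpleGraph.boxProd_adj]
    rw [e1.map_rel_iff, e2.map_rel_iff, EmbeddingLike.apply_eq_iff_eq,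
      EmbeddingLike.apply_eq_iff_eq]

/-! ### main induction -/

lemma hamConn_ssq : ∀ t : ℕ, HamConn (SSQ (4*t+6)) := by
  intro t
  induction t with
  | zero =>
    have iso : SSQ (4*0+6) ≃g Q2 □ G3 :=
      (isoSplit 0).trans (boxCongr iso2 (SimpleGraph.Iso.refl : G3 ≃g G3))
    exact HamConn.of_iso iso.symm hamConn_B
  | succ t ih =>
    have e : 4*t+6 = 4*(t+1)+2 := by ring
    rw [e] at ih
    have hprod : HamConn (SSQ (4*(t+1)+2) □ G3) :=
      boxProd_hamConn ih hamConn_G3 (h3_ssq _ (by omega)) h3_V3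
    exact HamConn.of_iso (isoSplit (t+1)).symm hprod

/-- For every `n ≥ 6` with `n ≡ 2 (mod 4)`, the simplified shuffle-cube
`SSQ_n` is Hamiltonian-connected: any two distinct vertices are joined by a
Hamiltonian path. -/
theorem ssq_hamiltonianConnected (n : ℕ) (hn : 6 ≤ n) (hmod : n % 4 = 2)
    (u v : SSQVertex n) (huv : u ≠ v) :
    ∃ p : (SSQ n).Walk u v, p.IsHamiltonian := by
  obtain ⟨t, rfl⟩ : ∃ t, n = 4*t+6 := ⟨(n-6)/4, by omega⟩
  exact hamConn_ssq t u v huv
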